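/- Let ρ ∈ (0,1), let π be a bounded probability density on [0,1], let b : [0,1]² → ℝ be bounded measurable, define Φ(g)(x,y) = ρ·π(y)·∫*_{u=x}^{y} [g(x,u) + g(y,u)] du + b(x,y), let g₀ be bounded measurable and g_{n+1} = Φ(g_n), and let g* be the pointwise limit of (g_n). If δ > 0 and n ≥ 2 are such that sup_{x,y ∈ [0,1]} |g_n(x,y) − g_{n−1}(x,y)| ≤ δ, then for all x, y ∈ [0,1]: |g_n(x,y) − g*(x,y)| ≤ 4·ρ·δ·π(y)/(1−ρ). -/

import Mathlib

open MeasureTheory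

/-- Circular integral: `∫*_{u=a}^{b} h(u) du` on the circle `[0,1)`.
It equals `∫_a^b h` if `a ≤ b` and `∫_a^1 h + ∫_0^b h` if `a > b`. -/
noncomputable def cint (a b : ℝ) (h : ℝ → ℝ) : ℝ :=
  if a ≤ b then ∫ u in a..b, h u
  else (∫ u in a..(1 : ℝ), h u) + ∫ u in (0 : ℝ)..b, h u

namespace SSEB

lemma II_of {f : ℝ → ℝ} (hf : IntegrableOn f (Set.Icc 0 1)) {p q : ℝ}
    (hp : p ∈ Set.Icc (0:ℝ) 1) (hq : q ∈ Set.Icc (0:ℝ) 1) :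
    IntervalIntegrable f volume p q := by
  apply IntegrableOn.intervalIntegrable
  refine hf.mono_set ?_
  rw [← Set.uIcc_of_le (by norm_num : (0:ℝ) ≤ 1)] at hp hq ⊢
  exact Set.uIcc_subset_uIcc hp hq

lemma quad_aux (f : ℝ → ℝ) {s t : ℝ} (hst : s ≤ t)
    (hint : IntegrableOn f (Set.Icc s t)) :
    ∫ u in s..t, f u * (∫ w in s..u, f w) = (∫ w in s..t, f w)^2 / 2 := by
  set I : ℝ → ℝ := fun u => ∫ w in s..u, f w with hI
  have hIoc : IntegrableOn f (Set.Ioc s t) := hint.mono_set Set.Ioc_subset_Icc_self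
  set μ := volume.restrict (Set.Ioc s t) with hμ
  have hIcont : ContinuousOn I (Set.Icc s t) := by
    have := intervalIntegral.continuousOn_primitive_interval
      (a := s) (b := t) (μ := volume) (f := f) (by rwa [Set.uIcc_of_le hst])
    rwa [Set.uIcc_of_le hst] at this
  have hfI_int : IntegrableOn (fun u => f u * I u) (Set.Ioc s t) :=
    (hint.mul_continuousOn hIcont isCompact_Icc).mono_set Set.Ioc_subset_Icc_self
  set S : Set (ℝ × ℝ) := {q : ℝ × ℝ | q.2 ≤ q.1} with hS
  have hSm : MeasurableSet S := measurableSet_le measurable_snd measurable_fst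
  set F : ℝ × ℝ → ℝ := S.indicator (fun q => f q.1 * f q.2) with hF
  have hFint : Integrable F (μ.prod μ) := (hIoc.mul_prod hIoc).indicator hSm
  have swap : ∫ u, (∫ v, F (u, v) ∂μ) ∂μ = ∫ v, (∫ u, F (u, v) ∂μ) ∂μ :=
    MeasureTheory.integral_integral_swap (f := fun u v => F (u, v)) hFint
  have hII : ∀ {p q : ℝ}, p ∈ Set.Icc s t → q ∈ Set.Icc s t → IntervalIntegrable f volume p q := by
    intro p q hp hq
    apply IntegrableOn.intervalIntegrable
    refine hint.mono_set ?_
    rw [← Set.uIcc_of_le hst] at hp hq ⊢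
    exact Set.uIcc_subset_uIcc hp hq
  have hL : ∫ u, (∫ v, F (u, v) ∂μ) ∂μ = ∫ u in Set.Ioc s t, f u * I u := by
    refine setIntegral_congr_fun measurableSet_Ioc (fun u hu => ?_)
    have h1 : ∀ v : ℝ, F (u, v) = (Set.Iic u).indicator (fun v => f u * f v) v := by
      intro v
      by_cases h : v ≤ u <;> simp [hF, hS, Set.indicator_apply, h]
    simp_rw [h1]
    rw [hμ, integral_indicator measurableSet_Iic, Measure.restrict_restrict measurableSet_Iic]
    have h2 : Set.Iic u ∩ Set.Ioc s t = Set.Ioc s u := by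
      ext w; simp only [Set.mem_inter_iff, Set.mem_Iic, Set.mem_Ioc]
      constructor
      · rintro ⟨h3, h4, h5⟩; exact ⟨h4, h3⟩
      · rintro ⟨h3, h4⟩; exact ⟨h4, h3, le_trans h4 hu.2⟩
    rw [h2, integral_const_mul]
    congr 1
    rw [hI]
    simp only []
    rw [intervalIntegral.integral_of_le hu.1.le]
  have hR : ∫ v, (∫ u, F (u, v) ∂μ) ∂μ
      = ∫ v in Set.Ioc s t, f v * (I t - I v) := by
    refine setIntegral_congr_fun measurableSet_Ioc (fun v hv => ?_)
    have h1 : ∀ u : ℝ, F (u, v) = (Set.Ici v).indicator (fun u => f u * f v) u := by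
      intro u
      by_cases h : v ≤ u <;> simp [hF, hS, Set.indicator_apply, h]
    simp_rw [h1]
    rw [hμ, integral_indicator measurableSet_Ici, Measure.restrict_restrict measurableSet_Ici]
    have h2 : Set.Ici v ∩ Set.Ioc s t = Set.Icc v t := by
      ext w; simp only [Set.mem_inter_iff, Set.mem_Ici, Set.mem_Ioc, Set.mem_Icc]
      constructor
      · rintro ⟨h3, h4, h5⟩; exact ⟨h3, h5⟩
      · rintro ⟨h3, h4⟩; exact ⟨h3, lt_of_lt_of_le hv.1 h3, h4⟩
    rw [h2, integral_Icc_eq_integral_Ioc, integral_mul_const, mul_comm]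
    congr 1
    rw [← intervalIntegral.integral_of_le hv.2]
    have h3 := intervalIntegral.integral_interval_sub_left
      (hII (Set.left_mem_Icc.2 hst) (Set.right_mem_Icc.2 hst))
      (hII (Set.left_mem_Icc.2 hst) (Set.Ioc_subset_Icc_self hv))
    exact h3.symm
  have key : ∫ u in Set.Ioc s t, f u * I u
      = ∫ v in Set.Ioc s t, f v * (I t - I v) := by rw [← hL, ← hR, swap]
  have expand : ∫ v in Set.Ioc s t, f v * (I t - I v)
      = (∫ v in Set.Ioc s t, f v) * I t - ∫ v in Set.Ioc s t, f v * I v := by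
    have : ∀ v, f v * (I t - I v) = f v * I t - f v * I v := by intro v; ring
    simp_rw [this]
    rw [integral_sub (hIoc.mul_const _) hfI_int, integral_mul_const]
  have hT : (∫ v in Set.Ioc s t, f v) = I t := by
    rw [hI]; simp only []; rw [intervalIntegral.integral_of_le hst]
  rw [intervalIntegral.integral_of_le hst]
  have h2A : (2 : ℝ) * ∫ u in Set.Ioc s t, f u * I u = (I t)^2 := by
    rw [two_mul]
    nth_rewrite 1 [key]
    rw [expand, hT]; ring
  show (∫ u in Set.Ioc s t, f u * I u) = (I t)^2 / 2
  linarith [h2A]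

lemma cint_const_mul (a b c : ℝ) (h : ℝ → ℝ) :
    cint a b (fun u => c * h u) = c * cint a b h := by
  unfold cint
  split_ifs <;> simp [intervalIntegral.integral_const_mul, mul_add]

lemma cint_sub {f g : ℝ → ℝ} (hf : IntegrableOn f (Set.Icc 0 1))
    (hg : IntegrableOn g (Set.Icc 0 1)) {a b : ℝ}
    (ha : a ∈ Set.Icc (0:ℝ) 1) (hb : b ∈ Set.Icc (0:ℝ) 1) :
    cint a b (fun u => f u - g u) = cint a b f - cint a b g := by
  have h0 : (0:ℝ) ∈ Set.Icc (0:ℝ) 1 := by norm_num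
  have h1 : (1:ℝ) ∈ Set.Icc (0:ℝ) 1 := by norm_num
  unfold cint
  split_ifs
  · exact intervalIntegral.integral_sub (II_of hf ha hb) (II_of hg ha hb)
  · rw [intervalIntegral.integral_sub (II_of hf ha h1) (II_of hg ha h1),
      intervalIntegral.integral_sub (II_of hf h0 hb) (II_of hg h0 hb)]
    ring

lemma cint_mono {f g : ℝ → ℝ} (hf : IntegrableOn f (Set.Icc 0 1))
    (hg : IntegrableOn g (Set.Icc 0 1))
    (hle : ∀ u ∈ Set.Icc (0:ℝ) 1, f u ≤ g u) {a b : ℝ}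
    (ha : a ∈ Set.Icc (0:ℝ) 1) (hb : b ∈ Set.Icc (0:ℝ) 1) :
    cint a b f ≤ cint a b g := by
  have h0 : (0:ℝ) ∈ Set.Icc (0:ℝ) 1 := by norm_num
  have h1 : (1:ℝ) ∈ Set.Icc (0:ℝ) 1 := by norm_num
  have key : ∀ {p q : ℝ}, p ∈ Set.Icc (0:ℝ) 1 → q ∈ Set.Icc (0:ℝ) 1 → p ≤ q →
      ∫ u in p..q, f u ≤ ∫ u in p..q, g u := by
    intro p q hp hq hpq
    refine intervalIntegral.integral_mono_on hpq (II_of hf hp hq) (II_of hg hp hq) ?_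
    intro x hx
    exact hle x ⟨le_trans hp.1 hx.1, le_trans hx.2 hq.2⟩
  unfold cint
  split_ifs with h
  · exact key ha hb h
  · exact add_le_add (key ha h1 ha.2) (key h0 hb hb.1)

lemma cint_abs_le {f g : ℝ → ℝ} (hf : IntegrableOn f (Set.Icc 0 1))
    (hg : IntegrableOn g (Set.Icc 0 1))
    (hle : ∀ u ∈ Set.Icc (0:ℝ) 1, |f u| ≤ g u) {a b : ℝ}
    (ha : a ∈ Set.Icc (0:ℝ) 1) (hb : b ∈ Set.Icc (0:ℝ) 1) :
    |cint a b f| ≤ cint a b g := by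
  have habs : |cint a b f| ≤ cint a b (fun u => |f u|) := by
    unfold cint
    split_ifs with h
    · exact intervalIntegral.abs_integral_le_integral_abs h
    · refine le_trans (abs_add_le _ _) (add_le_add ?_ ?_)
      · exact intervalIntegral.abs_integral_le_integral_abs ha.2
      · exact intervalIntegral.abs_integral_le_integral_abs hb.1
  exact le_trans habs (cint_mono hf.abs hg (fun u hu => hle u hu) ha hb)

lemma cint_le_total {g : ℝ → ℝ} (hg : IntegrableOn g (Set.Icc 0 1))
    (hnn : ∀ u ∈ Set.Icc (0:ℝ) 1, 0 ≤ g u) {a b : ℝ}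
    (ha : a ∈ Set.Icc (0:ℝ) 1) (hb : b ∈ Set.Icc (0:ℝ) 1) :
    cint a b g ≤ ∫ u in (0:ℝ)..1, g u := by
  have h0 : (0:ℝ) ∈ Set.Icc (0:ℝ) 1 := by norm_num
  have h1 : (1:ℝ) ∈ Set.Icc (0:ℝ) 1 := by norm_num
  have hnn' : ∀ {p q : ℝ}, p ∈ Set.Icc (0:ℝ) 1 → q ∈ Set.Icc (0:ℝ) 1 → p ≤ q →
      0 ≤ ∫ u in p..q, g u := by
    intro p q hp hq hpq
    refine intervalIntegral.integral_nonneg hpq ?_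
    intro x hx
    exact hnn x ⟨le_trans hp.1 hx.1, le_trans hx.2 hq.2⟩
  unfold cint
  split_ifs with h
  · rw [← intervalIntegral.integral_add_adjacent_intervals (II_of hg h0 ha) (II_of hg ha h1),
      ← intervalIntegral.integral_add_adjacent_intervals (II_of hg ha hb) (II_of hg hb h1)]
    have := hnn' h0 ha ha.1
    have := hnn' hb h1 hb.2
    linarith
  · push_neg at h
    rw [← intervalIntegral.integral_add_adjacent_intervals (II_of hg h0 hb) (II_of hg hb h1),
      ← intervalIntegral.integral_add_adjacent_intervals (II_of hg hb ha) (II_of hg ha h1)]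
    have := hnn' hb ha h.le
    linarith

lemma cint_nonneg {g : ℝ → ℝ} (hg : IntegrableOn g (Set.Icc 0 1))
    (hnn : ∀ u ∈ Set.Icc (0:ℝ) 1, 0 ≤ g u) {a b : ℝ}
    (ha : a ∈ Set.Icc (0:ℝ) 1) (hb : b ∈ Set.Icc (0:ℝ) 1) :
    0 ≤ cint a b g := by
  have h0 : (0:ℝ) ∈ Set.Icc (0:ℝ) 1 := by norm_num
  have h1 : (1:ℝ) ∈ Set.Icc (0:ℝ) 1 := by norm_num
  have hnn' : ∀ {p q : ℝ}, p ∈ Set.Icc (0:ℝ) 1 → q ∈ Set.Icc (0:ℝ) 1 → p ≤ q →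
      0 ≤ ∫ u in p..q, g u := by
    intro p q hp hq hpq
    refine intervalIntegral.integral_nonneg hpq ?_
    intro x hx
    exact hnn x ⟨le_trans hp.1 hx.1, le_trans hx.2 hq.2⟩
  unfold cint
  split_ifs with h
  · exact hnn' ha hb h
  · push_neg at h
    have := hnn' ha h1 ha.2
    have := hnn' h0 hb hb.1
    linarith

lemma cint_abs_le_const {f : ℝ → ℝ} (hf : IntegrableOn f (Set.Icc 0 1)) {C : ℝ}
    (hC : ∀ u ∈ Set.Icc (0:ℝ) 1, |f u| ≤ C) {a b : ℝ}
    (ha : a ∈ Set.Icc (0:ℝ) 1) (hb : b ∈ Set.Icc (0:ℝ) 1) :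
    |cint a b f| ≤ C := by
  have hvol : volume (Set.Icc (0:ℝ) 1) < ⊤ := measure_Icc_lt_top
  have hC0 : 0 ≤ C := (abs_nonneg _).trans (hC 0 (by norm_num))
  have hgi : IntegrableOn (fun _ : ℝ => C) (Set.Icc 0 1) :=
    integrableOn_const hvol.ne
  have h1 := cint_abs_le hf hgi hC ha hb
  refine h1.trans ?_
  refine (cint_le_total hgi (fun u _ => hC0) ha hb).trans ?_
  simp

lemma cint_eigen {π : ℝ → ℝ}
    (hπi : IntegrableOn π (Set.Icc 0 1))
    (hπint : (∫ u in (0:ℝ)..1, π u) = 1)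
    {x y : ℝ} (hx : x ∈ Set.Icc (0:ℝ) 1) (hy : y ∈ Set.Icc (0:ℝ) 1) :
    cint x y (fun u => π u * (cint x u π + cint y u π)) = cint x y π := by
  have h0 : (0:ℝ) ∈ Set.Icc (0:ℝ) 1 := by norm_num
  have h1 : (1:ℝ) ∈ Set.Icc (0:ℝ) 1 := by norm_num
  set P : ℝ → ℝ := fun t => ∫ u in (0:ℝ)..t, π u with hPdef
  have hsub : ∀ p q : ℝ, p ∈ Set.Icc (0:ℝ) 1 → q ∈ Set.Icc (0:ℝ) 1 →
      (∫ u in p..q, π u) = P q - P p := by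
    intro p q hp hq
    exact (intervalIntegral.integral_interval_sub_left (II_of hπi h0 hq) (II_of hπi h0 hp)).symm
  have hP1 : P 1 = 1 := hπint
  have hP0 : P 0 = 0 := intervalIntegral.integral_same
  have hPcont : ContinuousOn P (Set.Icc 0 1) := by
    have := intervalIntegral.continuousOn_primitive_interval (a := 0) (b := 1) (f := π)
      (μ := volume) (by rwa [Set.uIcc_of_le (by norm_num : (0:ℝ) ≤ 1)])
    rwa [Set.uIcc_of_le (by norm_num : (0:ℝ) ≤ 1)] at this
  have hπP_int : IntegrableOn (fun u => π u * P u) (Set.Icc 0 1) :=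
    hπi.mul_continuousOn hPcont isCompact_Icc
  have hQ : ∀ p q : ℝ, p ∈ Set.Icc (0:ℝ) 1 → q ∈ Set.Icc (0:ℝ) 1 → p ≤ q →
      (∫ u in p..q, π u * P u) = (P q ^ 2 - P p ^ 2) / 2 := by
    intro p q hp hq hpq
    have hIpq : IntegrableOn π (Set.Icc p q) := hπi.mono_set (Set.Icc_subset_Icc hp.1 hq.2)
    have hA := quad_aux π hpq hIpq
    have hcont2 : ContinuousOn (fun u => ∫ w in p..u, π w) (Set.Icc p q) := by
      have := intervalIntegral.continuousOn_primitive_interval (a := p) (b := q) (f := π)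
        (μ := volume) (by rwa [Set.uIcc_of_le hpq])
      rwa [Set.uIcc_of_le hpq] at this
    have hint2 : IntervalIntegrable (fun u => π u * ∫ w in p..u, π w) volume p q := by
      apply IntegrableOn.intervalIntegrable
      rw [Set.uIcc_of_le hpq]
      exact hIpq.mul_continuousOn hcont2 isCompact_Icc
    have hint1 : IntervalIntegrable (fun u => π u * P p) volume p q :=
      (II_of hπi hp hq).mul_const _
    have hcongr : (∫ u in p..q, π u * P u)
        = ∫ u in p..q, (π u * P p + π u * (∫ w in p..u, π w)) := by
      refine intervalIntegral.integral_congr (fun u hu => ?_)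
      rw [Set.uIcc_of_le hpq] at hu
      have hu' : u ∈ Set.Icc (0:ℝ) 1 := ⟨le_trans hp.1 hu.1, le_trans hu.2 hq.2⟩
      rw [hsub p u hp hu']
      ring
    rw [hcongr, intervalIntegral.integral_add hint1 hint2,
      intervalIntegral.integral_mul_const, hA, hsub p q hp hq]
    ring
  have hae : ∀ᵐ u : ℝ ∂volume, u ≠ y := by
    have h := measure_singleton (α := ℝ) (μ := volume) y
    rw [← MeasureTheory.compl_mem_ae_iff] at h
    exact h
  by_cases hxy : x ≤ y
  · unfold cint
    rw [if_pos hxy, if_pos hxy]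
    have hcong : (∫ u in x..y, π u *
          ((if x ≤ u then ∫ w in x..u, π w else (∫ w in x..1, π w) + ∫ w in (0:ℝ)..u, π w) +
           (if y ≤ u then ∫ w in y..u, π w else (∫ w in y..1, π w) + ∫ w in (0:ℝ)..u, π w)))
        = ∫ u in x..y, (2 * (π u * P u) + (1 - P x - P y) * π u) := by
      refine intervalIntegral.integral_congr_ae ?_
      filter_upwards [hae] with u hu hmem
      rw [Set.uIoc_of_le hxy] at hmem
      have hu1 : u ∈ Set.Icc (0:ℝ) 1 := ⟨le_trans hx.1 hmem.1.le, le_trans hmem.2 hy.2⟩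
      rw [if_pos hmem.1.le, if_neg (by exact fun h => hu (le_antisymm hmem.2 h)),
        hsub x u hx hu1, hsub y 1 hy h1, hsub 0 u h0 hu1, hP1, hP0]
      ring
    rw [hcong, intervalIntegral.integral_add
        ((II_of hπP_int hx hy).const_mul 2) ((II_of hπi hx hy).const_mul _),
      intervalIntegral.integral_const_mul, intervalIntegral.integral_const_mul,
      hQ x y hx hy hxy, hsub x y hx hy]
    ring
  · unfold cint
    rw [if_neg hxy, if_neg hxy]
    push_neg at hxy
    have hc1 : (∫ u in x..1, π u *
          ((if x ≤ u then ∫ w in x..u, π w else (∫ w in x..1, π w) + ∫ w in (0:ℝ)..u, π w) +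
           (if y ≤ u then ∫ w in y..u, π w else (∫ w in y..1, π w) + ∫ w in (0:ℝ)..u, π w)))
        = ∫ u in x..1, (2 * (π u * P u) + (0 - P x - P y) * π u) := by
      refine intervalIntegral.integral_congr (fun u hu => ?_)
      rw [Set.uIcc_of_le hx.2] at hu
      have hu1 : u ∈ Set.Icc (0:ℝ) 1 := ⟨le_trans hx.1 hu.1, hu.2⟩
      rw [if_pos hu.1, if_pos (le_trans hxy.le hu.1),
        hsub x u hx hu1, hsub y u hy hu1]
      ring
    have hc2 : (∫ u in (0:ℝ)..y, π u *
          ((if x ≤ u then ∫ w in x..u, π w else (∫ w in x..1, π w) + ∫ w in (0:ℝ)..u, π w) +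
           (if y ≤ u then ∫ w in y..u, π w else (∫ w in y..1, π w) + ∫ w in (0:ℝ)..u, π w)))
        = ∫ u in (0:ℝ)..y, (2 * (π u * P u) + (2 - P x - P y) * π u) := by
      refine intervalIntegral.integral_congr_ae ?_
      filter_upwards [hae] with u hu hmem
      rw [Set.uIoc_of_le hy.1] at hmem
      have hu1 : u ∈ Set.Icc (0:ℝ) 1 := ⟨hmem.1.le, le_trans hmem.2 hy.2⟩
      rw [if_neg (fun h : x ≤ u => (not_lt.2 (le_trans h hmem.2)) hxy),
        if_neg (fun h : y ≤ u => hu (le_antisymm hmem.2 h)),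
        hsub x 1 hx h1, hsub y 1 hy h1, hsub 0 u h0 hu1, hP1, hP0]
      ring
    rw [hc1, hc2,
      intervalIntegral.integral_add ((II_of hπP_int hx h1).const_mul 2) ((II_of hπi hx h1).const_mul _),
      intervalIntegral.integral_add ((II_of hπP_int h0 hy).const_mul 2) ((II_of hπi h0 hy).const_mul _),
      intervalIntegral.integral_const_mul, intervalIntegral.integral_const_mul,
      intervalIntegral.integral_const_mul, intervalIntegral.integral_const_mul,
      hQ x 1 hx h1 hx.2, hQ 0 y h0 hy hy.1,
      hsub x 1 hx h1, hsub 0 y h0 hy, hP1, hP0]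
    ring

lemma measurable_cint_param {H : ℝ × ℝ → ℝ → ℝ}
    (hH : Measurable (fun q : (ℝ × ℝ) × ℝ => H q.1 q.2)) :
    Measurable (fun p : ℝ × ℝ => cint p.1 p.2 (H p)) := by
  have hint : ∀ a c : ℝ × ℝ → ℝ, Measurable a → Measurable c →
      Measurable (fun p => ∫ u in a p..(c p), H p u) := by
    intro a c ha hc
    have heq : ∀ p, (∫ u in a p..(c p), H p u)
        = (∫ u, (Set.Ioc (a p) (c p)).indicator (H p) u)
          - (∫ u, (Set.Ioc (c p) (a p)).indicator (H p) u) := by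
      intro p
      rw [integral_indicator measurableSet_Ioc, integral_indicator measurableSet_Ioc]
      rfl
    simp_rw [heq]
    have hmk : ∀ a c : ℝ × ℝ → ℝ, Measurable a → Measurable c →
        Measurable (fun p : ℝ × ℝ => ∫ u, (Set.Ioc (a p) (c p)).indicator (H p) u) := by
      intro a c ha hc
      have hind : Measurable (fun q : (ℝ × ℝ) × ℝ =>
          (Set.Ioc (a q.1) (c q.1)).indicator (H q.1) q.2) := by
        have : (fun q : (ℝ × ℝ) × ℝ => (Set.Ioc (a q.1) (c q.1)).indicator (H q.1) q.2)
            = fun q : (ℝ × ℝ) × ℝ =>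
              if a q.1 < q.2 ∧ q.2 ≤ c q.1 then H q.1 q.2 else 0 := by
          funext q
          simp [Set.indicator_apply, Set.mem_Ioc]
        rw [this]
        refine Measurable.ite ?_ hH measurable_const
        rw [Set.setOf_and]
        exact (measurableSet_lt (ha.comp measurable_fst) measurable_snd).inter
          (measurableSet_le measurable_snd (hc.comp measurable_fst))
      exact (hind.stronglyMeasurable.integral_prod_right').measurable
    exact (hmk a c ha hc).sub (hmk c a hc ha)
  unfold cint
  refine Measurable.ite (measurableSet_le measurable_fst measurable_snd)
    (hint _ _ measurable_fst measurable_snd) ?_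
  exact (hint _ _ measurable_fst measurable_const).add
    (hint _ _ measurable_const measurable_snd)

end SSEB

open SSEB

/-- Error bound for the successive-substitution iteration: if it is stopped at
step `n ≥ 2` with `sup |g_n − g_{n−1}| ≤ δ`, then the distance to the pointwise
limit `g*` satisfies `|g_n(x,y) − g*(x,y)| ≤ 4ρδπ(y)/(1−ρ)` on `[0,1]²`. -/
theorem successive_substitution_error_bound
    (ρ : ℝ) (hρ : ρ ∈ Set.Ioo (0 : ℝ) 1)
    (π : ℝ → ℝ) (hπmeas : Measurable π)
    (hπnn : ∀ x ∈ Set.Icc (0 : ℝ) 1, 0 ≤ π x)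
    (hπbd : ∃ M : ℝ, ∀ x ∈ Set.Icc (0 : ℝ) 1, π x ≤ M)
    (hπint : (∫ u in (0 : ℝ)..1, π u) = 1)
    (b : ℝ → ℝ → ℝ)
    (hbmeas : Measurable (Function.uncurry b))
    (hbbd : ∃ M : ℝ, ∀ x ∈ Set.Icc (0 : ℝ) 1, ∀ y ∈ Set.Icc (0 : ℝ) 1, |b x y| ≤ M)
    (g : ℕ → ℝ → ℝ → ℝ)
    (hg0meas : Measurable (Function.uncurry (g 0)))
    (hg0bd : ∃ M : ℝ, ∀ x ∈ Set.Icc (0 : ℝ) 1, ∀ y ∈ Set.Icc (0 : ℝ) 1, |g 0 x y| ≤ M)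
    (hgrec : ∀ (n : ℕ) (x y : ℝ),
      g (n + 1) x y = ρ * π y * cint x y (fun u => g n x u + g n y u) + b x y)
    (gstar : ℝ → ℝ → ℝ)
    (hgstar : ∀ x ∈ Set.Icc (0 : ℝ) 1, ∀ y ∈ Set.Icc (0 : ℝ) 1,
      Filter.Tendsto (fun n => g n x y) Filter.atTop (nhds (gstar x y)))
    (δ : ℝ) (hδ : 0 < δ)
    (n : ℕ) (hn : 2 ≤ n)
    (hstop : ∀ x ∈ Set.Icc (0 : ℝ) 1, ∀ y ∈ Set.Icc (0 : ℝ) 1,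
      |g n x y - g (n - 1) x y| ≤ δ) :
    ∀ x ∈ Set.Icc (0 : ℝ) 1, ∀ y ∈ Set.Icc (0 : ℝ) 1,
      |g n x y - gstar x y| ≤ 4 * ρ * δ * π y / (1 - ρ) := by
  obtain ⟨hρ0, hρ1⟩ := hρ
  obtain ⟨Mπ, hMπ⟩ := hπbd
  obtain ⟨Mb, hMb⟩ := hbbd
  have h0 : (0:ℝ) ∈ Set.Icc (0:ℝ) 1 := by norm_num
  have h1 : (1:ℝ) ∈ Set.Icc (0:ℝ) 1 := by norm_num
  have hvol : volume (Set.Icc (0:ℝ) 1) < ⊤ := measure_Icc_lt_top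
  have hbm_int : ∀ (f : ℝ → ℝ) (C : ℝ), Measurable f →
      (∀ u ∈ Set.Icc (0:ℝ) 1, |f u| ≤ C) → IntegrableOn f (Set.Icc 0 1) := by
    intro f C hfm hfb
    refine Integrable.mono' (integrable_const C) hfm.aestronglyMeasurable.restrict ?_
    rw [ae_restrict_iff' measurableSet_Icc]
    exact Filter.Eventually.of_forall fun u hu => hfb u hu
  have hπi : IntegrableOn π (Set.Icc 0 1) :=
    hbm_int π Mπ hπmeas (fun u hu => by rw [abs_of_nonneg (hπnn u hu)]; exact hMπ u hu)
  -- measurability and boundedness of every iterate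
  have hgmb : ∀ m, Measurable (Function.uncurry (g m)) ∧
      ∃ B, ∀ x ∈ Set.Icc (0:ℝ) 1, ∀ y ∈ Set.Icc (0:ℝ) 1, |g m x y| ≤ B := by
    intro m
    induction m with
    | zero => exact ⟨hg0meas, hg0bd⟩
    | succ m ih =>
      obtain ⟨hGm, B, hB⟩ := ih
      have hB0 : 0 ≤ B := (abs_nonneg _).trans (hB 0 h0 0 h0)
      have hslx : ∀ x : ℝ, Measurable (fun u => g m x u) := fun x =>
        hGm.comp (measurable_const.prodMk measurable_id)
      constructor
      · have heq : Function.uncurry (g (m+1)) = fun p : ℝ × ℝ =>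
            ρ * π p.2 * cint p.1 p.2 (fun u => g m p.1 u + g m p.2 u) + b p.1 p.2 := by
          funext p; exact hgrec m p.1 p.2
        rw [heq]
        refine Measurable.add (Measurable.mul ?_ ?_) ?_
        · exact measurable_const.mul (hπmeas.comp measurable_snd)
        · exact measurable_cint_param (H := fun p u => g m p.1 u + g m p.2 u)
            ((hGm.comp ((measurable_fst.comp measurable_fst).prodMk measurable_snd)).add
             (hGm.comp ((measurable_snd.comp measurable_fst).prodMk measurable_snd)))
        · exact hbmeas
      · refine ⟨Mπ * (2*B) + Mb, fun x hx y hy => ?_⟩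
        rw [hgrec m x y]
        have hFi : IntegrableOn (fun u => g m x u + g m y u) (Set.Icc 0 1) :=
          (hbm_int _ B (hslx x) (fun u hu => hB x hx u hu)).add
          (hbm_int _ B (hslx y) (fun u hu => hB y hy u hu))
        have hcb : |cint x y (fun u => g m x u + g m y u)| ≤ 2*B := by
          refine cint_abs_le_const hFi (fun u hu => ?_) hx hy
          have t1 := hB x hx u hu
          have t2 := hB y hy u hu
          calc |g m x u + g m y u| ≤ |g m x u| + |g m y u| := abs_add_le _ _
            _ ≤ 2*B := by linarith
        have hπy0 := hπnn y hy
        have hπyM := hMπ y hy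
        have hb' := hMb x hx y hy
        calc |ρ * π y * cint x y (fun u => g m x u + g m y u) + b x y|
            ≤ |ρ * π y * cint x y (fun u => g m x u + g m y u)| + |b x y| := abs_add_le _ _
          _ ≤ Mπ * (2*B) + Mb := by
              rw [abs_mul, abs_mul, abs_of_nonneg hρ0.le, abs_of_nonneg hπy0]
              have hc0 : 0 ≤ |cint x y (fun u => g m x u + g m y u)| := abs_nonneg _
              have hMπ0' : 0 ≤ Mπ := le_trans hπy0 hπyM
              nlinarith [mul_nonneg hπy0 hc0, mul_le_mul hπyM hcb hc0 hMπ0']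
  have hsliceInt : ∀ m x, x ∈ Set.Icc (0:ℝ) 1 →
      IntegrableOn (fun u => g m x u) (Set.Icc 0 1) := by
    intro m x hx
    obtain ⟨hGm, B, hB⟩ := hgmb m
    exact hbm_int _ B (hGm.comp (measurable_const.prodMk measurable_id))
      (fun u hu => hB x hx u hu)
  -- bounds on the cumulative density
  have hPc01 : ∀ a ∈ Set.Icc (0:ℝ) 1, ∀ c ∈ Set.Icc (0:ℝ) 1,
      0 ≤ cint a c π ∧ cint a c π ≤ 1 := fun a ha c hc =>
    ⟨cint_nonneg hπi hπnn ha hc, (cint_le_total hπi hπnn ha hc).trans (le_of_eq hπint)⟩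
  have hMπ0 : 0 ≤ Mπ := (hπnn 0 h0).trans (hMπ 0 h0)
  have hπPc_int : ∀ x ∈ Set.Icc (0:ℝ) 1, ∀ y ∈ Set.Icc (0:ℝ) 1,
      IntegrableOn (fun u => π u * (cint x u π + cint y u π)) (Set.Icc 0 1) := by
    intro x hx y hy
    have hm0 : Measurable fun p : ℝ × ℝ => cint p.1 p.2 π :=
      measurable_cint_param (H := fun _ u => π u) (hπmeas.comp measurable_snd)
    have hmx : Measurable (fun u : ℝ => cint x u π) :=
      hm0.comp (measurable_const.prodMk measurable_id)
    have hmy : Measurable (fun u : ℝ => cint y u π) :=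
      hm0.comp (measurable_const.prodMk measurable_id)
    refine hbm_int _ (Mπ * 2) (hπmeas.mul (hmx.add hmy)) (fun u hu => ?_)
    have hx' := hPc01 x hx u hu
    have hy' := hPc01 y hy u hu
    have hπu := hπnn u hu
    have hπuM := hMπ u hu
    rw [abs_of_nonneg (by nlinarith : (0:ℝ) ≤ π u * (cint x u π + cint y u π))]
    nlinarith
  -- step-1 bound
  have hn1 : n - 1 + 1 = n := by omega
  have hbase : ∀ x ∈ Set.Icc (0:ℝ) 1, ∀ y ∈ Set.Icc (0:ℝ) 1,
      |g (n+1) x y - g n x y| ≤ 2*ρ*δ*π y := by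
    intro x hx y hy
    have e1 := hgrec n x y
    have e2 := hgrec (n-1) x y
    rw [hn1] at e2
    have hF1 : IntegrableOn (fun u => g n x u + g n y u) (Set.Icc 0 1) :=
      (hsliceInt n x hx).add (hsliceInt n y hy)
    have hF2 : IntegrableOn (fun u => g (n-1) x u + g (n-1) y u) (Set.Icc 0 1) :=
      (hsliceInt (n-1) x hx).add (hsliceInt (n-1) y hy)
    have ediff : g (n+1) x y - g n x y
        = ρ * π y * cint x y
            (fun u => (g n x u + g n y u) - (g (n-1) x u + g (n-1) y u)) := by
      rw [e1, e2, cint_sub hF1 hF2 hx hy]; ring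
    rw [ediff, abs_mul, abs_mul, abs_of_nonneg hρ0.le, abs_of_nonneg (hπnn y hy)]
    have hc : |cint x y (fun u => (g n x u + g n y u) - (g (n-1) x u + g (n-1) y u))|
        ≤ 2*δ := by
      refine cint_abs_le_const (hF1.sub hF2) (fun u hu => ?_) hx hy
      have t1 := hstop x hx u hu
      have t2 := hstop y hy u hu
      calc |(g n x u + g n y u) - (g (n-1) x u + g (n-1) y u)|
          = |(g n x u - g (n-1) x u) + (g n y u - g (n-1) y u)| := by congr 1; ring
        _ ≤ |g n x u - g (n-1) x u| + |g n y u - g (n-1) y u| := abs_add_le _ _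
        _ ≤ 2*δ := by linarith
    have hπy := hπnn y hy
    calc ρ * π y * |cint x y (fun u => (g n x u + g n y u) - (g (n-1) x u + g (n-1) y u))|
        ≤ ρ * π y * (2*δ) := by
          exact mul_le_mul_of_nonneg_left hc (mul_nonneg hρ0.le hπy)
      _ = 2*ρ*δ*π y := by ring
  -- the geometric family of bounds
  have hk : ∀ k, ∀ x ∈ Set.Icc (0:ℝ) 1, ∀ y ∈ Set.Icc (0:ℝ) 1,
      |g (n+k+2) x y - g (n+k+1) x y| ≤ 4*ρ^(k+2)*δ*π y * cint x y π := by
    intro k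
    induction k with
    | zero =>
      intro x hx y hy
      show |g (n+1+1) x y - g (n+1) x y| ≤ 4*ρ^(0+2)*δ*π y * cint x y π
      have e1 := hgrec (n+1) x y
      have e2 := hgrec n x y
      have hF1 : IntegrableOn (fun u => g (n+1) x u + g (n+1) y u) (Set.Icc 0 1) :=
        (hsliceInt (n+1) x hx).add (hsliceInt (n+1) y hy)
      have hF2 : IntegrableOn (fun u => g n x u + g n y u) (Set.Icc 0 1) :=
        (hsliceInt n x hx).add (hsliceInt n y hy)
      have ediff : g (n+1+1) x y - g (n+1) x y
          = ρ * π y * cint x y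
              (fun u => (g (n+1) x u + g (n+1) y u) - (g n x u + g n y u)) := by
        rw [e1, e2, cint_sub hF1 hF2 hx hy]; ring
      rw [ediff, abs_mul, abs_mul, abs_of_nonneg hρ0.le, abs_of_nonneg (hπnn y hy)]
      have hc : |cint x y (fun u => (g (n+1) x u + g (n+1) y u) - (g n x u + g n y u))|
          ≤ 4*ρ*δ * cint x y π := by
        have hle : ∀ u ∈ Set.Icc (0:ℝ) 1,
            |(g (n+1) x u + g (n+1) y u) - (g n x u + g n y u)|
              ≤ 4*ρ*δ * π u := by
          intro u hu
          have t1 := hbase x hx u hu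
          have t2 := hbase y hy u hu
          calc |(g (n+1) x u + g (n+1) y u) - (g n x u + g n y u)|
              = |(g (n+1) x u - g n x u) + (g (n+1) y u - g n y u)| := by congr 1; ring
            _ ≤ |g (n+1) x u - g n x u| + |g (n+1) y u - g n y u| := abs_add_le _ _
            _ ≤ 4*ρ*δ * π u := by linarith
        have := cint_abs_le (hF1.sub hF2) (hπi.const_mul (4*ρ*δ)) hle hx hy
        rwa [cint_const_mul] at this
      have hπy := hπnn y hy
      calc ρ * π y * |cint x y (fun u => (g (n+1) x u + g (n+1) y u) - (g n x u + g n y u))|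
          ≤ ρ * π y * (4*ρ*δ * cint x y π) := by
            exact mul_le_mul_of_nonneg_left hc (mul_nonneg hρ0.le hπy)
        _ = 4*ρ^(0+2)*δ*π y * cint x y π := by ring
    | succ k ih =>
      intro x hx y hy
      show |g (n+k+1+1+1) x y - g (n+k+1+1) x y| ≤ 4*ρ^(k+1+2)*δ*π y * cint x y π
      have e1 := hgrec (n+k+1+1) x y
      have e2 := hgrec (n+k+1) x y
      have hF1 : IntegrableOn (fun u => g (n+k+1+1) x u + g (n+k+1+1) y u) (Set.Icc 0 1) :=
        (hsliceInt (n+k+1+1) x hx).add (hsliceInt (n+k+1+1) y hy)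
      have hF2 : IntegrableOn (fun u => g (n+k+1) x u + g (n+k+1) y u) (Set.Icc 0 1) :=
        (hsliceInt (n+k+1) x hx).add (hsliceInt (n+k+1) y hy)
      have ediff : g (n+k+1+1+1) x y - g (n+k+1+1) x y
          = ρ * π y * cint x y
              (fun u => (g (n+k+1+1) x u + g (n+k+1+1) y u)
                - (g (n+k+1) x u + g (n+k+1) y u)) := by
        rw [e1, e2, cint_sub hF1 hF2 hx hy]; ring
      rw [ediff, abs_mul, abs_mul, abs_of_nonneg hρ0.le, abs_of_nonneg (hπnn y hy)]
      have hc : |cint x y (fun u => (g (n+k+1+1) x u + g (n+k+1+1) y u)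
            - (g (n+k+1) x u + g (n+k+1) y u))|
          ≤ 4*ρ^(k+2)*δ * cint x y π := by
        have hle : ∀ u ∈ Set.Icc (0:ℝ) 1,
            |(g (n+k+1+1) x u + g (n+k+1+1) y u) - (g (n+k+1) x u + g (n+k+1) y u)|
              ≤ 4*ρ^(k+2)*δ * (π u * (cint x u π + cint y u π)) := by
          intro u hu
          have t1 : |g (n+k+1+1) x u - g (n+k+1) x u| ≤ 4*ρ^(k+2)*δ*π u * cint x u π :=
            ih x hx u hu
          have t2 : |g (n+k+1+1) y u - g (n+k+1) y u| ≤ 4*ρ^(k+2)*δ*π u * cint y u π :=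
            ih y hy u hu
          calc |(g (n+k+1+1) x u + g (n+k+1+1) y u) - (g (n+k+1) x u + g (n+k+1) y u)|
              = |(g (n+k+1+1) x u - g (n+k+1) x u) + (g (n+k+1+1) y u - g (n+k+1) y u)| := by
                congr 1; ring
            _ ≤ |g (n+k+1+1) x u - g (n+k+1) x u| + |g (n+k+1+1) y u - g (n+k+1) y u| :=
                abs_add_le _ _
            _ ≤ 4*ρ^(k+2)*δ * (π u * (cint x u π + cint y u π)) := by linarith [t1, t2,
                (by ring : 4*ρ^(k+2)*δ*π u * cint x u π + 4*ρ^(k+2)*δ*π u * cint y u π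
                  = 4*ρ^(k+2)*δ * (π u * (cint x u π + cint y u π)))]
        have := cint_abs_le (hF1.sub hF2)
          ((hπPc_int x hx y hy).const_mul (4*ρ^(k+2)*δ)) hle hx hy
        rwa [cint_const_mul, cint_eigen hπi hπint hx hy] at this
      have hπy := hπnn y hy
      calc ρ * π y * |cint x y (fun u => (g (n+k+1+1) x u + g (n+k+1+1) y u)
            - (g (n+k+1) x u + g (n+k+1) y u))|
          ≤ ρ * π y * (4*ρ^(k+2)*δ * cint x y π) := by
            exact mul_le_mul_of_nonneg_left hc (mul_nonneg hρ0.le hπy)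
        _ = 4*ρ^(k+1+2)*δ*π y * cint x y π := by ring
  -- conclude
  intro x hx y hy
  have hπy := hπnn y hy
  have hρδπ : 0 ≤ ρ*δ*π y := mul_nonneg (mul_nonneg hρ0.le hδ.le) hπy
  have hstep : ∀ j, |g (n+j+1) x y - g (n+j) x y| ≤ (4*ρ*δ*π y) * ρ^j := by
    intro j
    match j with
    | 0 =>
      have h := hbase x hx y hy
      have he : (4*ρ*δ*π y) * ρ^0 = 4*ρ*δ*π y := by ring
      show |g (n+1) x y - g n x y| ≤ (4*ρ*δ*π y) * ρ^0
      rw [he]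
      linarith
    | (i+1) =>
      have t : |g (n+i+1+1) x y - g (n+i+1) x y| ≤ 4*ρ^(i+2)*δ*π y * cint x y π := by
        have := hk i x hx y hy
        exact this
      have hPc := hPc01 x hx y hy
      show |g (n+i+1+1) x y - g (n+i+1) x y| ≤ (4*ρ*δ*π y) * ρ^(i+1)
      have h4nn : 0 ≤ 4*ρ^(i+2)*δ*π y :=
        mul_nonneg (mul_nonneg (mul_nonneg (by norm_num) (pow_nonneg hρ0.le _)) hδ.le) hπy
      calc |g (n+i+1+1) x y - g (n+i+1) x y| ≤ 4*ρ^(i+2)*δ*π y * cint x y π := t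
        _ ≤ 4*ρ^(i+2)*δ*π y * 1 := mul_le_mul_of_nonneg_left hPc.2 h4nn
        _ = (4*ρ*δ*π y) * ρ^(i+1) := by ring
  have hpartial : ∀ K, |g n x y - g (n+K) x y| ≤ 4*ρ*δ*π y / (1-ρ) := by
    intro K
    have htel : ∑ j ∈ Finset.range K, (g (n+j+1) x y - g (n+j) x y)
        = g (n+K) x y - g n x y :=
      Finset.sum_range_sub (f := fun j => g (n+j) x y) K
    have habs : |g n x y - g (n+K) x y| ≤ ∑ j ∈ Finset.range K, (4*ρ*δ*π y) * ρ^j := by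
      rw [abs_sub_comm, ← htel]
      exact (Finset.abs_sum_le_sum_abs _ _).trans (Finset.sum_le_sum fun j _ => hstep j)
    refine habs.trans ?_
    rw [← Finset.mul_sum]
    have hgeom : ∑ j ∈ Finset.range K, ρ^j ≤ 1/(1-ρ) := by
      rw [geom_sum_eq (ne_of_lt hρ1) K]
      have hd : (ρ^K - 1)/(ρ - 1) = (1 - ρ^K)/(1-ρ) := by
        rw [div_eq_div_iff (by linarith) (by linarith)]; ring
      rw [hd]
      have hpow : 0 ≤ ρ^K := pow_nonneg hρ0.le K
      gcongr
      · linarith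
    calc (4*ρ*δ*π y) * ∑ j ∈ Finset.range K, ρ^j
        ≤ (4*ρ*δ*π y) * (1/(1-ρ)) :=
          mul_le_mul_of_nonneg_left hgeom (by linarith)
      _ = 4*ρ*δ*π y/(1-ρ) := by ring
  have hlim : Filter.Tendsto (fun K => g (n+K) x y) Filter.atTop (nhds (gstar x y)) := by
    have h1' := (hgstar x hx y hy).comp (Filter.tendsto_add_atTop_nat n)
    have heq : (fun K => g (n+K) x y) = (fun m => g m x y) ∘ (fun K => K + n) := by
      funext K; simp [Function.comp, Nat.add_comm]
    rw [heq]; exact h1'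
  have htend : Filter.Tendsto (fun K => |g n x y - g (n+K) x y|) Filter.atTop
      (nhds (|g n x y - gstar x y|)) := (tendsto_const_nhds.sub hlim).abs
  exact le_of_tendsto' htend hpartial
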